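/- Let h : ℝⁿ → ℝ be convex and differentiable, let λ > 0, let x ∈ ℝⁿ, and let p = prox_h^λ(x) be the unique minimizer of u ↦ h(u) + ‖x − u‖²/(2λ). Then ‖∇h(p)‖ ≤ ‖∇h(x)‖. -/

import Mathlib

open scoped RealInnerProductSpace

theorem stmt_12 {n : ℕ} (h : EuclideanSpace ℝ (Fin n) → ℝ) (lam : ℝ)
    (hconv : ConvexOn ℝ Set.univ h) (hdiff : Differentiable ℝ h)
    (hlam : 0 < lam) (x p : EuclideanSpace ℝ (Fin n))
    (hp : IsMinOn (fun u => h u + ‖x - u‖ ^ 2 / (2 * lam)) Set.univ p) :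
    ‖gradient h p‖ ≤ ‖gradient h x‖ := by
  set g : EuclideanSpace ℝ (Fin n) → EuclideanSpace ℝ (Fin n) := gradient h with hg
  have hfd : ∀ y, HasFDerivAt h (InnerProductSpace.toDual ℝ (EuclideanSpace ℝ (Fin n)) (g y)) y :=
    fun y => hasGradientAt_iff_hasFDerivAt.1 (DifferentiableAt.hasGradientAt (hdiff y))
  -- Step 1: optimality condition, x - p = lam • g p
  have hopt : x - p = lam • g p := by
    have h1 : HasFDerivAt (fun u : EuclideanSpace ℝ (Fin n) => x - u)
        (-ContinuousLinearMap.id ℝ (EuclideanSpace ℝ (Fin n))) p := by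
      simpa using (hasFDerivAt_id p).const_sub x
    have hq : HasFDerivAt (fun u : EuclideanSpace ℝ (Fin n) => ‖x - u‖ ^ 2)
        ((fderivInnerCLM ℝ (x - p, x - p)).comp
          ((-ContinuousLinearMap.id ℝ (EuclideanSpace ℝ (Fin n))).prod
            (-ContinuousLinearMap.id ℝ (EuclideanSpace ℝ (Fin n))))) p := by
      have := h1.inner ℝ h1
      simpa only [real_inner_self_eq_norm_sq] using this
    have hF : HasFDerivAt (fun u => h u + ‖x - u‖ ^ 2 / (2 * lam))
        (InnerProductSpace.toDual ℝ (EuclideanSpace ℝ (Fin n)) (g p) +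
          (2 * lam)⁻¹ • ((fderivInnerCLM ℝ (x - p, x - p)).comp
            ((-ContinuousLinearMap.id ℝ (EuclideanSpace ℝ (Fin n))).prod
              (-ContinuousLinearMap.id ℝ (EuclideanSpace ℝ (Fin n)))))) p := by
      have := (hfd p).add (hq.const_mul (2 * lam)⁻¹)
      simpa [div_eq_inv_mul, Pi.add_def] using this
    have hmin : IsLocalMin (fun u => h u + ‖x - u‖ ^ 2 / (2 * lam)) p :=
      hp.isLocalMin Filter.univ_mem
    have hzero := hmin.hasFDerivAt_eq_zero hF
    have key : ∀ v : EuclideanSpace ℝ (Fin n),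
        ⟪g p, v⟫ + (2 * lam)⁻¹ * (⟪x - p, -v⟫ + ⟪-v, x - p⟫) = 0 := by
      intro v
      have := congrArg (fun L : EuclideanSpace ℝ (Fin n) →L[ℝ] ℝ => L v) hzero
      simpa [fderivInnerCLM_apply, InnerProductSpace.toDual_apply_apply] using this
    have key2 : ∀ v : EuclideanSpace ℝ (Fin n), ⟪x - p - lam • g p, v⟫ = 0 := by
      intro v
      have hk := key v
      have e1 : ⟪x - p, -v⟫ = -⟪x - p, v⟫ := inner_neg_right _ _
      have e2 : ⟪-v, x - p⟫ = -⟪x - p, v⟫ := by rw [inner_neg_left, real_inner_comm]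
      rw [e1, e2] at hk
      rw [inner_sub_left, real_inner_smul_left]
      have hlam' : lam ≠ 0 := ne_of_gt hlam
      have h6 : ⟪g p, v⟫ = lam⁻¹ * ⟪x - p, v⟫ := by linear_combination hk
      rw [h6, ← mul_assoc, mul_inv_cancel₀ hlam', one_mul, sub_self]
    have := key2 (x - p - lam • g p)
    rw [inner_self_eq_zero] at this
    linear_combination (norm := module) this
  -- Step 2: monotonicity of gradient along the segment from p to x
  have hmono : ⟪g p, x - p⟫ ≤ ⟪g x, x - p⟫ := by
    set c : ℝ → EuclideanSpace ℝ (Fin n) := fun t => p + t • (x - p) with hc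
    have hcder : ∀ t : ℝ, HasDerivAt c (x - p) t := fun t => by
      simpa [hc] using ((hasDerivAt_id t).smul_const (x - p)).const_add p
    have hφder : ∀ t : ℝ, HasDerivAt (h ∘ c) ⟪g (c t), x - p⟫ t := fun t => by
      simpa [InnerProductSpace.toDual_apply_apply] using (hfd (c t)).comp_hasDerivAt t (hcder t)
    have hφconv : ConvexOn ℝ Set.univ (h ∘ c) := by
      have haff := hconv.comp_affineMap (AffineMap.lineMap p x : ℝ →ᵃ[ℝ] EuclideanSpace ℝ (Fin n))
      have heq : (h ∘ (AffineMap.lineMap p x : ℝ →ᵃ[ℝ] EuclideanSpace ℝ (Fin n))) = h ∘ c := by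
        funext t
        simp only [Function.comp_apply, AffineMap.lineMap_apply, hc, vsub_eq_sub, vadd_eq_add]
        congr 1
        module
      rw [heq, Set.preimage_univ] at haff
      exact haff
    have hmderiv := hφconv.monotoneOn_deriv
      (fun t _ => (hφder t).differentiableAt)
      (Set.mem_univ (0 : ℝ)) (Set.mem_univ (1 : ℝ)) zero_le_one
    rw [(hφder 0).deriv, (hφder 1).deriv] at hmderiv
    have hc0 : c 0 = p := by simp [hc]
    have hc1 : c 1 = x := by simp [hc]
    rwa [hc0, hc1] at hmderiv
  -- Step 3: conclude
  have hsub : ⟪g p, lam • g p⟫ ≤ ⟪g x, lam • g p⟫ := by rwa [hopt] at hmono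
  rw [real_inner_smul_right, real_inner_smul_right] at hsub
  have h1 : ‖g p‖ ^ 2 ≤ ⟪g x, g p⟫ := by
    rw [← real_inner_self_eq_norm_sq]
    exact le_of_mul_le_mul_left (by linarith [hsub]) hlam
  have h2 : ⟪g x, g p⟫ ≤ ‖g x‖ * ‖g p‖ := real_inner_le_norm _ _
  rcases eq_or_lt_of_le (norm_nonneg (g p)) with hz | hz
  · rw [← hz]; exact norm_nonneg _
  · have : ‖g p‖ * ‖g p‖ ≤ ‖g x‖ * ‖g p‖ := by nlinarith
    exact le_of_mul_le_mul_right this hz
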